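/- For every n ≥ 1 and every τ ∈ S_n, ∑_{g∈S_n} m̃aj(g)·m̃aj(g⁻¹τ) = −(n!/2)·m̃aj(τ), where m̃aj(σ) = maj(σ) − n(n−1)/4. In particular, −(2/n!)·m̃aj is an idempotent under convolution in ℚ[S_n]. -/

import Mathlib

def descents (n : ℕ) (σ : Equiv.Perm (Fin n)) : Finset (Fin (n - 1)) :=
  Finset.univ.filter fun i =>
    σ ⟨i.1 + 1, by have := i.isLt; omega⟩ < σ ⟨i.1, by have := i.isLt; omega⟩

def desStat (n : ℕ) (σ : Equiv.Perm (Fin n)) : ℕ := (descents n σ).card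

def majStat (n : ℕ) (σ : Equiv.Perm (Fin n)) : ℕ := ∑ i ∈ descents n σ, (i.1 + 1)

def invStat (n : ℕ) (σ : Equiv.Perm (Fin n)) : ℕ :=
  (Finset.univ.filter fun p : Fin n × Fin n => p.1 < p.2 ∧ σ p.2 < σ p.1).card

def fixStat (n : ℕ) (σ : Equiv.Perm (Fin n)) : ℕ :=
  (Finset.univ.filter fun i : Fin n => σ i = i).card

noncomputable def majC (n : ℕ) (σ : Equiv.Perm (Fin n)) : ℚ :=
  (majStat n σ : ℚ) - n * (n - 1) / 4

noncomputable def desC (n : ℕ) (σ : Equiv.Perm (Fin n)) : ℚ :=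
  (desStat n σ : ℚ) - (n - 1) / 2

noncomputable def invC (n : ℕ) (σ : Equiv.Perm (Fin n)) : ℚ :=
  (invStat n σ : ℚ) - n * (n - 1) / 4

variable {n : ℕ}

def mpos1 (n : ℕ) (i : Fin (n - 1)) : Fin n := ⟨i.1, by have := i.isLt; omega⟩
def mpos2 (n : ℕ) (i : Fin (n - 1)) : Fin n := ⟨i.1 + 1, by have := i.isLt; omega⟩

lemma mpos_ne (i : Fin (n - 1)) : mpos1 n i ≠ mpos2 n i := by
  simp [mpos1, mpos2, Fin.ext_iff]

def meps (n : ℕ) (i : Fin (n - 1)) (g : Equiv.Perm (Fin n)) : ℚ :=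
  if g (mpos2 n i) < g (mpos1 n i) then 1 else -1

lemma gauss (m : ℕ) : ∑ i : Fin m, ((i.1 : ℚ) + 1) = m * (m + 1) / 2 := by
  induction m with
  | zero => simp
  | succ k ih =>
    rw [Fin.sum_univ_castSucc]
    simp only [Fin.coe_castSucc, Fin.val_last]
    rw [ih]
    push_cast
    ring

lemma majC_eq (hn : 1 ≤ n) (g : Equiv.Perm (Fin n)) :
    majC n g = ∑ i : Fin (n - 1), (((i.1 : ℚ) + 1) / 2) * meps n i g := by
  unfold majC majStat
  have h1 : ∀ i : Fin (n - 1), (((i.1 : ℚ) + 1) / 2) * meps n i g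
      = (if g (mpos2 n i) < g (mpos1 n i) then ((i.1 : ℚ) + 1) else 0) - ((i.1 : ℚ) + 1) / 2 := by
    intro i
    unfold meps
    split <;> ring
  rw [Finset.sum_congr rfl (fun i _ => h1 i), Finset.sum_sub_distrib, ← Finset.sum_filter]
  have h2 : ((∑ i ∈ descents n g, (i.1 + 1) : ℕ) : ℚ)
      = ∑ i ∈ Finset.univ.filter (fun i : Fin (n-1) => g (mpos2 n i) < g (mpos1 n i)), ((i.1 : ℚ) + 1) := by
    rw [descents]
    push_cast
    rfl
  rw [h2]
  have h3 : ∑ i : Fin (n - 1), ((i.1 : ℚ) + 1) / 2 = (n : ℚ) * ((n : ℚ) - 1) / 4 := by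
    rw [← Finset.sum_div, gauss]
    have : ((n - 1 : ℕ) : ℚ) = (n : ℚ) - 1 := by
      simp [Nat.cast_sub hn]
    rw [this]
    ring
  rw [h3]

lemma swap_order_iff {x x' u v : Fin n} (hs : x'.1 = x.1 + 1)
    (h1 : ¬(u = x ∧ v = x')) (h2 : ¬(u = x' ∧ v = x)) :
    (Equiv.swap x x' u < Equiv.swap x x' v ↔ u < v) := by
  have hx : u.1 = x.1 ↔ u = x := by rw [Fin.ext_iff]
  simp only [Equiv.swap_apply_def]
  split_ifs <;>
    simp only [Fin.lt_def, Fin.ext_iff, not_and, ne_eq] at * <;> omega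

lemma meps_mul_swap (i : Fin (n - 1)) (g : Equiv.Perm (Fin n)) :
    meps n i (g * Equiv.swap (mpos1 n i) (mpos2 n i)) = - meps n i g := by
  have hne : g (mpos1 n i) ≠ g (mpos2 n i) := fun h => mpos_ne i (g.injective h)
  unfold meps
  rw [Equiv.Perm.mul_apply, Equiv.Perm.mul_apply, Equiv.swap_apply_left, Equiv.swap_apply_right]
  rcases lt_or_gt_of_ne hne with h | h
  · simp [h, not_lt_of_gt h]
  · simp [h, not_lt_of_gt h]

-- counting
def Nab (n : ℕ) (x y a b : Fin n) : ℕ :=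
  (Finset.univ.filter fun g : Equiv.Perm (Fin n) => g x = a ∧ g y = b).card

lemma Nab_const (x y a b a' b' : Fin n) (hab : a ≠ b) (hab' : a' ≠ b') :
    Nab n x y a b = Nab n x y a' b' := by
  classical
  obtain ⟨π, hπa, hπb⟩ : ∃ π : Equiv.Perm (Fin n), π a = a' ∧ π b = b' := by
    refine ⟨Equiv.swap (Equiv.swap a a' b) b' * Equiv.swap a a', ?_, ?_⟩
    · rw [Equiv.Perm.mul_apply, Equiv.swap_apply_left]
      have h2 : Equiv.swap a a' b ≠ a' := by
        have h3 := (Equiv.swap a a').injective.ne hab.symm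
        rwa [Equiv.swap_apply_left] at h3
      exact Equiv.swap_apply_of_ne_of_ne h2.symm hab'
    · rw [Equiv.Perm.mul_apply, Equiv.swap_apply_left]
  unfold Nab
  apply Finset.card_bij' (fun g _ => π * g) (fun g _ => π⁻¹ * g)
  · intro g hg
    simp only [Finset.mem_filter, Finset.mem_univ, true_and,
      Equiv.Perm.mul_apply] at hg ⊢
    rw [hg.1, hg.2, hπa, hπb]
    exact ⟨rfl, rfl⟩
  · intro g hg
    simp only [Finset.mem_filter, Finset.mem_univ, true_and,
      Equiv.Perm.mul_apply] at hg ⊢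
    constructor
    · rw [hg.1, ← hπa, Equiv.Perm.inv_def, Equiv.symm_apply_apply]
    · rw [hg.2, ← hπb, Equiv.Perm.inv_def, Equiv.symm_apply_apply]
  · intro g _; simp [← mul_assoc]
  · intro g _; simp [← mul_assoc]

lemma Nab_count (x y : Fin n) (hxy : x ≠ y) :
    ∑ p ∈ (Finset.univ : Finset (Fin n × Fin n)).filter (fun p => p.1 ≠ p.2),
      Nab n x y p.1 p.2 = n.factorial := by
  classical
  have hcard : (Finset.univ : Finset (Equiv.Perm (Fin n))).card = n.factorial := by
    rw [Finset.card_univ, Fintype.card_perm, Fintype.card_fin]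
  rw [← hcard]
  rw [Finset.card_eq_sum_card_fiberwise
      (f := fun g : Equiv.Perm (Fin n) => (g x, g y))
      (t := (Finset.univ : Finset (Fin n × Fin n)).filter (fun p => p.1 ≠ p.2))
      (fun g _ => by
        simp only [Finset.mem_coe, Finset.mem_filter, Finset.mem_univ, true_and]
        exact fun h => hxy (g.injective h))]
  apply Finset.sum_congr rfl
  intro p _
  unfold Nab
  congr 1
  apply Finset.filter_congr
  intro g _
  simp [Prod.ext_iff]

lemma Nab_mul (x y a b : Fin n) (hxy : x ≠ y) (hab : a ≠ b) :
    (n * (n - 1)) * Nab n x y a b = n.factorial := by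
  classical
  have h1 : ∑ p ∈ (Finset.univ : Finset (Fin n × Fin n)).filter (fun p => p.1 ≠ p.2),
      Nab n x y p.1 p.2 = n.factorial := Nab_count x y hxy
  have h2 : ∀ p ∈ (Finset.univ : Finset (Fin n × Fin n)).filter (fun p => p.1 ≠ p.2),
      Nab n x y p.1 p.2 = Nab n x y a b := by
    intro p hp
    simp only [Finset.mem_filter, Finset.mem_univ, true_and] at hp
    exact Nab_const x y p.1 p.2 a b hp hab
  rw [Finset.sum_congr rfl h2, Finset.sum_const, smul_eq_mul] at h1
  have h3 : ((Finset.univ : Finset (Fin n × Fin n)).filter (fun p => p.1 ≠ p.2)).card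
      = n * (n - 1) := by
    have : (Finset.univ : Finset (Fin n × Fin n)).filter (fun p => p.1 ≠ p.2)
        = (Finset.univ : Finset (Fin n)).offDiag := by
      ext p; simp [Finset.mem_offDiag]
    rw [this, Finset.offDiag_card, Finset.card_univ, Fintype.card_fin, Nat.mul_sub_one]
  rw [← h3]
  exact h1

lemma key_sum (i j : Fin (n - 1)) (τ : Equiv.Perm (Fin n)) :
    ∑ g : Equiv.Perm (Fin n), meps n i g * meps n j (g⁻¹ * τ)
      = -((Nab n (mpos1 n i) (mpos2 n i) (τ (mpos1 n j)) (τ (mpos2 n j))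
          + Nab n (mpos1 n i) (mpos2 n i) (τ (mpos2 n j)) (τ (mpos1 n j)) : ℕ) : ℚ)
        * meps n j τ := by
  classical
  set x := mpos1 n i with hxdef
  set x' := mpos2 n i with hx'def
  set y := mpos1 n j with hydef
  set y' := mpos2 n j with hy'def
  have hxx' : x ≠ x' := mpos_ne i
  have hs : x'.1 = x.1 + 1 := rfl
  have hyy' : y ≠ y' := mpos_ne j
  have hab : τ y ≠ τ y' := fun h => hyy' (τ.injective h)
  set a := τ y with hadef
  set b := τ y' with hbdef
  set P : Equiv.Perm (Fin n) → Prop :=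
    fun g => (g x = a ∧ g x' = b) ∨ (g x = b ∧ g x' = a) with hP
  set f : Equiv.Perm (Fin n) → ℚ := fun g => meps n i g * meps n j (g⁻¹ * τ) with hf
  have happ : ∀ g : Equiv.Perm (Fin n),
      meps n j (g⁻¹ * τ) = if g⁻¹ b < g⁻¹ a then 1 else -1 := by
    intro g
    unfold meps
    rw [Equiv.Perm.mul_apply, Equiv.Perm.mul_apply, ← hadef, ← hbdef]
  -- sum over the complement is zero
  have hcompl : ∑ g ∈ Finset.univ.filter (fun g => ¬ P g), f g = 0 := by
    apply Finset.sum_involution (fun g _ => g * Equiv.swap x x')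
    · intro g hg
      simp only [Finset.mem_filter, Finset.mem_univ, true_and, hP, not_or, not_and] at hg
      have e1 : meps n i (g * Equiv.swap x x') = - meps n i g := meps_mul_swap i g
      have e2 : meps n j ((g * Equiv.swap x x')⁻¹ * τ) = meps n j (g⁻¹ * τ) := by
        rw [happ, happ]
        have hb : (g * Equiv.swap x x')⁻¹ b = Equiv.swap x x' (g⁻¹ b) := by
          rw [mul_inv_rev, Equiv.swap_inv, Equiv.Perm.mul_apply]
        have ha : (g * Equiv.swap x x')⁻¹ a = Equiv.swap x x' (g⁻¹ a) := by
          rw [mul_inv_rev, Equiv.swap_inv, Equiv.Perm.mul_apply]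
        rw [hb, ha]
        have hiff : Equiv.swap x x' (g⁻¹ b) < Equiv.swap x x' (g⁻¹ a) ↔ g⁻¹ b < g⁻¹ a := by
          apply swap_order_iff hs
          · rintro ⟨h1, h2⟩
            rw [Equiv.Perm.inv_eq_iff_eq] at h1 h2
            exact hg.2 h1.symm h2.symm
          · rintro ⟨h1, h2⟩
            rw [Equiv.Perm.inv_eq_iff_eq] at h1 h2
            exact hg.1 h2.symm h1.symm
        simp only [hiff]
      show f g + f (g * Equiv.swap x x') = 0
      rw [hf]
      simp only []
      rw [e1, e2]
      ring
    · intro g hg _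
      intro h
      have h1 : g * Equiv.swap x x' = g * 1 := by rwa [mul_one]
      have h2 : Equiv.swap x x' = (1 : Equiv.Perm (Fin n)) := mul_left_cancel h1
      exact hxx' (by rw [← Equiv.swap_apply_left x x', h2]; rfl)
    · intro g hg
      simp only [Finset.mem_filter, Finset.mem_univ, true_and, hP, not_or, not_and,
        Equiv.Perm.mul_apply, Equiv.swap_apply_left, Equiv.swap_apply_right] at hg ⊢
      exact ⟨fun h1 h2 => hg.2 h2 h1, fun h1 h2 => hg.1 h2 h1⟩
    · intro g hg
      rw [mul_assoc, Equiv.swap_mul_self, mul_one]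
  -- sum over P
  have hmain : ∑ g ∈ Finset.univ.filter P, f g
      = -(((Finset.univ.filter P).card : ℚ)) * meps n j τ := by
    have hconst : ∀ g ∈ Finset.univ.filter P, f g = - meps n j τ := by
      intro g hg
      simp only [Finset.mem_filter, Finset.mem_univ, true_and, hP] at hg
      have hτ : meps n j τ = if b < a then 1 else -1 := by
        unfold meps
        rw [← hadef, ← hbdef]
      rcases hg with ⟨h1, h2⟩ | ⟨h1, h2⟩
      · rw [hf]
        simp only []
        rw [happ, hτ]
        have ea : g⁻¹ a = x := by rw [← h1, Equiv.Perm.inv_def, Equiv.symm_apply_apply]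
        have eb : g⁻¹ b = x' := by rw [← h2, Equiv.Perm.inv_def, Equiv.symm_apply_apply]
        rw [ea, eb]
        have hlt : ¬ (x' < x) := by
          simp only [Fin.lt_def, hs]
          omega
        have hba : (b < a) ↔ (g x' < g x) := by rw [← h1, ← h2]
        unfold meps
        rw [if_neg hlt]
        by_cases hc : b < a
        · rw [if_pos hc, if_pos (by rw [← hba]; exact hc)]; ring
        · rw [if_neg hc, if_neg (by rw [← hba]; exact hc)]; ring
      · rw [hf]
        simp only []
        rw [happ, hτ]
        have ea : g⁻¹ a = x' := by rw [← h2, Equiv.Perm.inv_def, Equiv.symm_apply_apply]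
        have eb : g⁻¹ b = x := by rw [← h1, Equiv.Perm.inv_def, Equiv.symm_apply_apply]
        rw [ea, eb]
        have hlt : x < x' := by
          simp only [Fin.lt_def, hs]
          omega
        have hab' : (a < b) ↔ (g x' < g x) := by rw [← h1, ← h2]
        unfold meps
        rw [if_pos hlt]
        rcases lt_or_gt_of_ne hab with hc | hc
        · rw [if_pos (by rw [← hab']; exact hc), if_neg (not_lt_of_gt hc)]; ring
        · rw [if_neg (by rw [← hab']; exact not_lt_of_gt hc), if_pos hc]; ring
    rw [Finset.sum_congr rfl hconst, Finset.sum_const, nsmul_eq_mul]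
    ring
  have hcard : (Finset.univ.filter P).card
      = Nab n x x' a b + Nab n x x' b a := by
    unfold Nab
    have hsplit : Finset.univ.filter P
        = (Finset.univ.filter fun g : Equiv.Perm (Fin n) => g x = a ∧ g x' = b)
          ∪ (Finset.univ.filter fun g : Equiv.Perm (Fin n) => g x = b ∧ g x' = a) := by
      ext g
      simp only [Finset.mem_filter, Finset.mem_union, Finset.mem_univ, true_and, hP]
    rw [hsplit]
    apply Finset.card_union_of_disjoint
    rw [Finset.disjoint_filter]
    rintro g _ ⟨h1, _⟩ ⟨h2, _⟩
    exact hab (h1 ▸ h2 ▸ rfl)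
  calc ∑ g : Equiv.Perm (Fin n), f g
      = ∑ g ∈ Finset.univ.filter P, f g
        + ∑ g ∈ Finset.univ.filter (fun g => ¬ P g), f g := by
        rw [Finset.sum_filter_add_sum_filter_not]
    _ = -(((Finset.univ.filter P).card : ℚ)) * meps n j τ := by
        rw [hcompl, add_zero]
        exact hmain
    _ = _ := by rw [hcard]

lemma pair_card (hn2 : 2 ≤ n) (i : Fin (n - 1)) {a b : Fin n} (hab : a ≠ b) :
    ((Nab n (mpos1 n i) (mpos2 n i) a b + Nab n (mpos1 n i) (mpos2 n i) b a : ℕ) : ℚ)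
      = 2 * (n.factorial : ℚ) / ((n : ℚ) * ((n : ℚ) - 1)) := by
  have hxy := mpos_ne i
  have h1 := Nab_mul (mpos1 n i) (mpos2 n i) a b hxy hab
  have h2 := Nab_mul (mpos1 n i) (mpos2 n i) b a hxy hab.symm
  have h3 : (n * (n - 1)) * (Nab n (mpos1 n i) (mpos2 n i) a b
      + Nab n (mpos1 n i) (mpos2 n i) b a) = 2 * n.factorial := by
    rw [Nat.mul_add, h1, h2, two_mul]
  have hcast : ((n * (n - 1) : ℕ) : ℚ) = (n : ℚ) * ((n : ℚ) - 1) := by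
    push_cast [Nat.cast_sub (by omega : 1 ≤ n)]
    ring
  have hne : (n : ℚ) * ((n : ℚ) - 1) ≠ 0 := by
    rw [← hcast]
    have : 0 < n * (n - 1) := Nat.mul_pos (by omega) (by omega)
    exact_mod_cast this.ne'
  rw [eq_div_iff hne, ← hcast, mul_comm]
  exact_mod_cast congrArg (Nat.cast (R := ℚ)) h3

lemma sum_w (hn : 1 ≤ n) :
    ∑ i : Fin (n - 1), ((i.1 : ℚ) + 1) / 2 = (n : ℚ) * ((n : ℚ) - 1) / 4 := by
  rw [← Finset.sum_div, gauss]
  have : ((n - 1 : ℕ) : ℚ) = (n : ℚ) - 1 := by simp [Nat.cast_sub hn]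
  rw [this]
  ring

lemma majC_one (σ : Equiv.Perm (Fin 1)) : majC 1 σ = 0 := by
  unfold majC majStat
  have : descents 1 σ = ∅ :=
    Finset.eq_empty_of_forall_notMem (fun i _ => by have := i.isLt; omega)
  rw [this]
  norm_num

lemma part1 (n : ℕ) (hn : 1 ≤ n) (τ : Equiv.Perm (Fin n)) :
    ∑ g : Equiv.Perm (Fin n), majC n g * majC n (g⁻¹ * τ)
      = -((n.factorial : ℚ) / 2) * majC n τ := by
  classical
  by_cases hn2 : 2 ≤ n
  · have hmaj : ∀ g : Equiv.Perm (Fin n),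
        majC n g = ∑ i : Fin (n - 1), (((i.1 : ℚ) + 1) / 2) * meps n i g :=
      fun g => majC_eq hn g
    set C : ℚ := 2 * (n.factorial : ℚ) / ((n : ℚ) * ((n : ℚ) - 1)) with hC
    have step1 : ∑ g : Equiv.Perm (Fin n), majC n g * majC n (g⁻¹ * τ)
        = ∑ i : Fin (n - 1), ∑ j : Fin (n - 1),
            (((i.1 : ℚ) + 1) / 2) * (((j.1 : ℚ) + 1) / 2)
              * (∑ g : Equiv.Perm (Fin n), meps n i g * meps n j (g⁻¹ * τ)) := by
      rw [Finset.sum_congr rfl (fun g _ => by rw [hmaj g, hmaj (g⁻¹ * τ), Finset.sum_mul_sum])]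
      rw [Finset.sum_comm]
      refine Finset.sum_congr rfl (fun i _ => ?_)
      rw [Finset.sum_comm]
      refine Finset.sum_congr rfl (fun j _ => ?_)
      rw [Finset.mul_sum]
      exact Finset.sum_congr rfl (fun g _ => by ring)
    rw [step1]
    have step2 : ∀ i j : Fin (n - 1),
        ∑ g : Equiv.Perm (Fin n), meps n i g * meps n j (g⁻¹ * τ) = -C * meps n j τ := by
      intro i j
      rw [key_sum i j τ]
      have hab : τ (mpos1 n j) ≠ τ (mpos2 n j) := fun h => mpos_ne j (τ.injective h)
      rw [pair_card hn2 i hab, hC]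
    rw [Finset.sum_congr rfl
      (fun i _ => Finset.sum_congr rfl (fun j _ => by rw [step2 i j]))]
    have e1 : ∀ i : Fin (n - 1),
        ∑ j : Fin (n - 1), (((i.1 : ℚ) + 1) / 2) * (((j.1 : ℚ) + 1) / 2) * (-C * meps n j τ)
          = (((i.1 : ℚ) + 1) / 2) * (-C) * majC n τ := by
      intro i
      rw [hmaj τ, Finset.mul_sum]
      exact Finset.sum_congr rfl (fun j _ => by ring)
    rw [Finset.sum_congr rfl (fun i _ => e1 i), ← Finset.sum_mul, ← Finset.sum_mul, sum_w hn]
    have h2n : (2 : ℚ) ≤ (n : ℚ) := by exact_mod_cast hn2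
    have hne : (n : ℚ) * ((n : ℚ) - 1) ≠ 0 :=
      mul_ne_zero (by positivity) (by intro h; nlinarith)
    have hn1 : (n : ℚ) - 1 ≠ 0 := by intro h; nlinarith
    rw [hC]
    field_simp
    ring
  · have h1 : n = 1 := by omega
    subst h1
    simp [majC_one]

theorem maj_conv_maj (n : ℕ) (hn : 1 ≤ n) :
    (∀ τ : Equiv.Perm (Fin n),
      ∑ g : Equiv.Perm (Fin n), majC n g * majC n (g⁻¹ * τ) =
        -((n.factorial : ℚ) / 2) * majC n τ) ∧
    (∀ τ : Equiv.Perm (Fin n),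
      ∑ g : Equiv.Perm (Fin n),
          (-(2 / (n.factorial : ℚ)) * majC n g) * (-(2 / (n.factorial : ℚ)) * majC n (g⁻¹ * τ)) =
        -(2 / (n.factorial : ℚ)) * majC n τ) := by
  constructor
  · exact part1 n hn
  · intro τ
    have hfac : (n.factorial : ℚ) ≠ 0 := by
      exact_mod_cast n.factorial_pos.ne'
    have h1 : ∑ g : Equiv.Perm (Fin n),
        (-(2 / (n.factorial : ℚ)) * majC n g) * (-(2 / (n.factorial : ℚ)) * majC n (g⁻¹ * τ))
        = (-(2 / (n.factorial : ℚ))) * (-(2 / (n.factorial : ℚ)))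
            * ∑ g : Equiv.Perm (Fin n), majC n g * majC n (g⁻¹ * τ) := by
      rw [Finset.mul_sum]
      exact Finset.sum_congr rfl (fun g _ => by ring)
    rw [h1, part1 n hn τ]
    field_simp
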